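/- Suppose M, N, I, (m_i) and (X_i) satisfy the hypotheses of the construction Q(N,(m_i),(X_i)). For each i ∈ I let n_i ∈ N be arbitrary and set m′_i = m_i + (1−t)·n_i. Then the quandles Q(N,(m_i),(X_i)) and Q(N,(m′_i),(X_i)) are isomorphic. -/

import Mathlib

open LaurentPolynomial

set_option synthInstance.maxHeartbeats 1000000
set_option maxHeartbeats 1000000

noncomputable section

/-- The ring `Λ = ℤ[t,t⁻¹]` of Laurent polynomials with integer coefficients. -/
abbrev Λ : Type := LaurentPolynomial ℤ

/-- The variable `t ∈ Λ`. -/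
abbrev tL : Λ := T 1

/-- A medial quandle structure on a type `Q`: an idempotent binary operation whose right
translations are bijections, satisfying the medial law. -/
structure MedialQuandleStr (Q : Type*) where
  op : Q → Q → Q
  idem : ∀ x, op x x = x
  bij : ∀ y, Function.Bijective fun x => op x y
  medial : ∀ w x y z, op (op w x) (op y z) = op (op w y) (op x z)

/-- A quandle structure on a type `T`. -/
structure QuandleStr (T : Type*) where
  op : T → T → T
  idem : ∀ x, op x x = x
  bij : ∀ y, Function.Bijective fun x => op x y
  distrib : ∀ x y z, op (op x y) z = op (op x z) (op y z)

namespace MedialQuandleStr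

variable {Q : Type*} (s : MedialQuandleStr Q)

/-- The translation `β_y : x ↦ x ▷ y`, as a permutation of `Q`. -/
def β (y : Q) : Equiv.Perm Q := Equiv.ofBijective _ (s.bij y)

/-- `β(Q)`: the subgroup of permutations generated by the translations. -/
def transGroup : Subgroup (Equiv.Perm Q) := Subgroup.closure (Set.range s.β)

/-- The displacement group `Dis(Q)`, generated by the elementary displacements
`β_y β_z⁻¹`. -/
def Dis : Subgroup (Equiv.Perm Q) :=
  Subgroup.closure {d : Equiv.Perm Q | ∃ y z, d = s.β y * (s.β z)⁻¹}

/-- The orbit of `q`: the smallest subset of `Q` containing `q` and closed under the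
action of `β(Q)`. -/
def orbit (q : Q) : Set Q := {x | ∃ g ∈ s.transGroup, g q = x}

end MedialQuandleStr

section Construction

variable {M : Type*} [AddCommGroup M] [Module Λ M] {I : Type*}

/-- The carrier of the quandle `Q(N,(m_i),(X_i))`: the disjoint union of the quotients
`Q_i = N/X_i`. -/
def QCar (N : Submodule Λ M) (X : I → Submodule Λ ↥N) : Type _ :=
  Σ i : I, ↥N ⧸ X i

/-- The condition `(1-t)·X_i = 0` for all `i`. -/
def annCond (N : Submodule Λ M) (X : I → Submodule Λ ↥N) : Prop :=
  ∀ i, ∀ x ∈ X i, (1 - tL) • (x : ↥N) = 0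

/-- Multiplication by `1-t`, descended from `N/X_j` to `N` (well defined since
`(1-t)·X_j = 0`). -/
def oneSubT (N : Submodule Λ M) {X : I → Submodule Λ ↥N} (h : annCond N X) (j : I) :
    (↥N ⧸ X j) →ₗ[Λ] ↥N :=
  Submodule.liftQ (X j) ((1 - tL) • (LinearMap.id : ↥N →ₗ[Λ] ↥N))
    (fun x hx => by simpa using h j x hx)

/-- The operation of `Q(N,(m_i),(X_i))`: for `x ∈ Q_i` and `y ∈ Q_j`,
`x ▷ y = m_j - m_i + t·x + (1-t)·y + X_i ∈ Q_i`. -/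
def qop (N : Submodule Λ M) (m : I → M) {X : I → Submodule Λ ↥N}
    (hm : ∀ i j, m i - m j ∈ N) (h : annCond N X) :
    QCar N X → QCar N X → QCar N X :=
  fun x y =>
    ⟨x.1, Submodule.Quotient.mk (⟨m y.1 - m x.1, hm y.1 x.1⟩ : ↥N)
        + tL • x.2 + Submodule.Quotient.mk (oneSubT N h y.1 y.2)⟩

end Construction

/-- Replacing each `m_i` by `m'_i = m_i + (1-t)·n_i` with `n_i ∈ N`
does not change the isomorphism type of the quandle of the construction:
`Q(N,(m_i),(X_i)) ≅ Q(N,(m'_i),(X_i))`. -/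
theorem stmt10 {M : Type*} [AddCommGroup M] [Module Λ M] {I : Type*} [Nonempty I]
    (N : Submodule Λ M) (m : I → M) (X : I → Submodule Λ ↥N)
    (hm : ∀ i j, m i - m j ∈ N) (h : annCond N X)
    (n : I → ↥N) (m' : I → M)
    (hm'def : ∀ i, m' i = m i + (1 - tL) • (n i : M)) :
    ∃ (hm' : ∀ i j, m' i - m' j ∈ N) (F : QCar N X ≃ QCar N X),
      ∀ x y, F (qop N m hm h x y) = qop N m' hm' h (F x) (F y) := by
  have hm' : ∀ i j, m' i - m' j ∈ N := by
    intro i j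
    rw [hm'def i, hm'def j]
    have : m i + (1 - tL) • (n i : M) - (m j + (1 - tL) • (n j : M))
        = (m i - m j) + ((1 - tL) • (n i : M) - (1 - tL) • (n j : M)) := by abel
    rw [this]
    exact N.add_mem (hm i j) (N.sub_mem (N.smul_mem _ (n i).2) (N.smul_mem _ (n j).2))
  refine ⟨hm', Equiv.mk
    (fun x : QCar N X => (⟨x.1, x.2 - Submodule.Quotient.mk (n x.1)⟩ : QCar N X))
    (fun x : QCar N X => (⟨x.1, x.2 + Submodule.Quotient.mk (n x.1)⟩ : QCar N X)) ?_ ?_, ?_⟩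
  · rintro ⟨i, a⟩; simp; rfl
  · rintro ⟨i, a⟩; simp; rfl
  · rintro ⟨i, a⟩ ⟨j, b⟩
    obtain ⟨a₀, rfl⟩ := Submodule.Quotient.mk_surjective _ a
    obtain ⟨b₀, rfl⟩ := Submodule.Quotient.mk_surjective _ b
    simp only [qop, oneSubT, Submodule.liftQ_apply, Equiv.coe_fn_mk]
    dsimp only [DFunLike.coe, EquivLike.coe]
    simp only [LinearMap.toFun_eq_coe]
    congr 1
    have h1 : (Submodule.Quotient.mk b₀ - Submodule.Quotient.mk (n j) :
        ↥N ⧸ X j) = Submodule.Quotient.mk (b₀ - n j) := by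
      rw [Submodule.Quotient.mk_sub]
    rw [h1, Submodule.liftQ_apply]
    simp only [LinearMap.smul_apply, LinearMap.id_coe, id_eq, ← Submodule.Quotient.mk_smul,
      ← Submodule.Quotient.mk_add, ← Submodule.Quotient.mk_sub]
    congr 1
    ext
    push_cast
    rw [hm'def i, hm'def j]
    simp only [smul_sub]
    module
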